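/- Let (X, d) be a metric space, let x_1, …, x_n ∈ X with n ≥ 1, let y ∈ X, and write ℓ_i := d(x_i, y) and L := Σ_{i=1}^n ℓ_i. Suppose ℓ_1 = min_i ℓ_i, let α ∈ (0, 1], and let F := {i : ℓ_i ≥ (1+α)·L/n}. Then Σ_{i=1}^n d(x_i, x_1) ≤ 2L − (α/2)·Σ_{i∈F} ℓ_i. -/
import Mathlib


/-- Inequality (4) in the proof of Lemma 3.2: if `x 0` attains the minimum distance to `y`
and `F` is the set of far points (distance at least `(1+α)·L/n` from `y`), then
`Σ_i d(x_i, x 0) ≤ 2L - (α/2)·Σ_{i∈F} d(x_i, y)`. -/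
theorem sum_dist_to_min_point_le {X : Type*} [MetricSpace X] {n : ℕ} (hn : 1 ≤ n)
    (x : Fin n → X) (y : X)
    (α : ℝ) (hα0 : 0 < α) (hα1 : α ≤ 1)
    (hmin : ∀ i, dist (x ⟨0, hn⟩) y ≤ dist (x i) y)
    (F : Finset (Fin n))
    (hF : ∀ i, i ∈ F ↔ (1 + α) * (∑ j, dist (x j) y) / (n : ℝ) ≤ dist (x i) y) :
    ∑ i, dist (x i) (x ⟨0, hn⟩)
      ≤ 2 * (∑ i, dist (x i) y) - (α / 2) * ∑ i ∈ F, dist (x i) y := by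
  set z := x ⟨0, hn⟩ with hz
  set L := ∑ j, dist (x j) y with hL
  have hnpos : (0:ℝ) < n := by positivity
  have hzL : (n:ℝ) * dist z y ≤ L := by
    calc (n:ℝ) * dist z y = ∑ _j : Fin n, dist z y := by
          simp [mul_comm]
      _ ≤ L := Finset.sum_le_sum fun i _ => hmin i
  have hF' : ∀ i ∈ F, dist (x i) z ≤ (2 - α/2) * dist (x i) y := by
    intro i hi
    have h1 : (1+α) * L / n ≤ dist (x i) y := (hF i).1 hi
    have htri : dist (x i) z ≤ dist (x i) y + dist z y := by
      calc dist (x i) z ≤ dist (x i) y + dist y z := dist_triangle _ _ _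
        _ = dist (x i) y + dist z y := by rw [dist_comm y z]
    have h2 : (1+α) * ((n:ℝ) * dist z y) ≤ (n:ℝ) * dist (x i) y := by
      have := (div_le_iff₀ hnpos).mp h1
      nlinarith [mul_le_mul_of_nonneg_left hzL (by linarith : (0:ℝ) ≤ 1+α)]
    have hd0 : 0 ≤ dist z y := dist_nonneg
    have hdi : 0 ≤ dist (x i) y := dist_nonneg
    -- (1+α) dist z y ≤ dist (x i) y
    have h3 : (1+α) * dist z y ≤ dist (x i) y := by
      have hn1 : (1:ℝ) ≤ n := by exact_mod_cast hn
      nlinarith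
    nlinarith [mul_nonneg hα0.le hd0, mul_nonneg hα0.le hdi, mul_nonneg (mul_nonneg hα0.le hα0.le) hdi]
  have hFc : ∀ i ∈ Fᶜ, dist (x i) z ≤ 2 * dist (x i) y := by
    intro i _
    have htri : dist (x i) z ≤ dist (x i) y + dist z y := by
      calc dist (x i) z ≤ dist (x i) y + dist y z := dist_triangle _ _ _
        _ = dist (x i) y + dist z y := by rw [dist_comm y z]
    have := hmin i
    linarith
  have hsplit1 : ∑ i, dist (x i) z
      = ∑ i ∈ F, dist (x i) z + ∑ i ∈ Fᶜ, dist (x i) z :=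
    (Finset.sum_add_sum_compl F _).symm
  have hsplit2 : L = ∑ i ∈ F, dist (x i) y + ∑ i ∈ Fᶜ, dist (x i) y :=
    (Finset.sum_add_sum_compl F _).symm
  have s1 : ∑ i ∈ F, dist (x i) z ≤ (2 - α/2) * ∑ i ∈ F, dist (x i) y := by
    rw [Finset.mul_sum]
    exact Finset.sum_le_sum hF'
  have s2 : ∑ i ∈ Fᶜ, dist (x i) z ≤ 2 * ∑ i ∈ Fᶜ, dist (x i) y := by
    rw [Finset.mul_sum]
    exact Finset.sum_le_sum hFc
  rw [hsplit1]
  linarith
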